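/- arXiv:2109.08212 — 2 statements merged into one kernel-verified Lean document; each statement's English description precedes it below -/
import Mathlib

section
/- Let φ, ψ be structural sets in ℝ_{0,m} and f: ℝᵐ → ℝ_{0,m} be C²-smooth. Then φ∂[Ψ₁^{φ,ψ}(f)]ψ∂ = Ψ₁^{φ,ψ}(φ∂[f]ψ∂). In particular, f is (φ,ψ)-inframonogenic if and only if Ψ₁^{φ,ψ}(f) is, provided m is odd. -/
open CliffordAlgebra

noncomputable section

/-- The quadratic form of `ℝ_{0,m}`: negative definite on `ℝ^m`. -/
abbrev Qf (m : ℕ) : QuadraticForm ℝ (Fin m → ℝ) :=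
  QuadraticMap.weightedSumSquares ℝ (fun _ : Fin m => (-1 : ℝ))

/-- The real Clifford algebra `ℝ_{0,m}`. -/
abbrev Cl (m : ℕ) := CliffordAlgebra (Qf m)

/-- A structural set: an orthonormal basis `ψ¹,…,ψᵐ` of `ℝᵐ`. -/
def IsStructuralSet {m : ℕ} (ψ : Fin m → (Fin m → ℝ)) : Prop :=
  ∀ i j, (∑ t, ψ i t * ψ j t) = if i = j then (1 : ℝ) else 0

/-- The ordered product `ψ_A = ψ^{j₁} ⋯ ψ^{j_k}` for `A = {j₁ < ⋯ < j_k}`. -/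
def prodS {m : ℕ} (ψ : Fin m → (Fin m → ℝ)) (A : Finset (Fin m)) : Cl m :=
  ((A.sort (· ≤ ·)).map (fun i => ι (Qf m) (ψ i))).prod

/-- The operator `Ψ_k^{φ,ψ}(a) = Σ_{|A|=k} φ_A a ψ̂_A`. -/
def PsiK {m : ℕ} (φ ψ : Fin m → (Fin m → ℝ)) (k : ℕ) (a : Cl m) : Cl m :=
  ∑ A ∈ Finset.univ.filter (fun A : Finset (Fin m) => A.card = k),
    prodS φ A * a * reverse (prodS ψ A)

/-- `Ψ₊ = Σ_{k even} Ψ_k`. -/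
def PsiPlus {m : ℕ} (φ ψ : Fin m → (Fin m → ℝ)) (a : Cl m) : Cl m :=
  ∑ k ∈ (Finset.range (m + 1)).filter (fun k => Even k), PsiK φ ψ k a

/-- `Ψ₋ = Σ_{k odd} Ψ_k`. -/
def PsiMinus {m : ℕ} (φ ψ : Fin m → (Fin m → ℝ)) (a : Cl m) : Cl m :=
  ∑ k ∈ (Finset.range (m + 1)).filter (fun k => Odd k), PsiK φ ψ k a

/-- `Ψ₁^{φ,ψ}(a) = Σⱼ φʲ a ψʲ`. -/
def Psi1 {m : ℕ} (φ ψ : Fin m → (Fin m → ℝ)) (a : Cl m) : Cl m :=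
  ∑ j, ι (Qf m) (φ j) * a * ι (Qf m) (ψ j)

/-- The standard basis of `ℝᵐ`. -/
def stdB {m : ℕ} (i : Fin m) : Fin m → ℝ := Pi.single i 1

/-- The basis multivector `e_A`. -/
def eA {m : ℕ} (A : Finset (Fin m)) : Cl m := prodS stdB A

/-- The element with coefficients `c` in the multivector basis. -/
def toCl {m : ℕ} (c : Finset (Fin m) → ℝ) : Cl m := ∑ A, c A • eA A

/-- The space `ℝ_{0,m}^{(k)}` of `k`-grade multivectors. -/
def gradeK (m k : ℕ) : Submodule ℝ (Cl m) :=
  Submodule.span ℝ {x | ∃ A : Finset (Fin m), A.card = k ∧ x = eA A}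

/-- Coefficient functions of `ℝ_{0,m}`-valued maps. -/
abbrev Coef (m : ℕ) := Finset (Fin m) → ℝ

/-- The coefficients of the even part `f₊`. -/
def cEven {m : ℕ} (c : Coef m) : Coef m := fun A => if Even A.card then c A else 0

/-- The coefficients of the odd part `f₋`. -/
def cOdd {m : ℕ} (c : Coef m) : Coef m := fun A => if Odd A.card then c A else 0

/-- The even part of a Clifford number. -/
def evenPart {m : ℕ} (a : Cl m) : Cl m :=
  (DirectSum.decompose (evenOdd (Qf m)) a 0 : evenOdd (Qf m) 0)

/-- The odd part of a Clifford number. -/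
def oddPart {m : ℕ} (a : Cl m) : Cl m :=
  (DirectSum.decompose (evenOdd (Qf m)) a 1 : evenOdd (Qf m) 1)

/-- Partial derivative `∂F/∂xᵢ` of a coefficient function. -/
def pd {m : ℕ} (i : Fin m) (F : (Fin m → ℝ) → Coef m) : (Fin m → ℝ) → Coef m :=
  fun x => fderiv ℝ F x (Pi.single i 1)

/-- The sandwich operator `φ∂[f]ψ∂ = Σᵢⱼ φⁱ (∂²f/∂xᵢ∂xⱼ) ψʲ` for `f = Σ_A F_A e_A`. -/
def sandwichD {m : ℕ} (φ ψ : Fin m → (Fin m → ℝ)) (F : (Fin m → ℝ) → Coef m)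
    (x : Fin m → ℝ) : Cl m :=
  ∑ i, ∑ j, ι (Qf m) (φ i) * toCl (pd i (pd j F) x) * ι (Qf m) (ψ j)

/-- The operator `φ∂[ψ∂[f]] = Σᵢⱼ φⁱ ψʲ ∂²f/∂xᵢ∂xⱼ`. -/
def ddD {m : ℕ} (φ ψ : Fin m → (Fin m → ℝ)) (F : (Fin m → ℝ) → Coef m)
    (x : Fin m → ℝ) : Cl m :=
  ∑ i, ∑ j, ι (Qf m) (φ i) * (ι (Qf m) (ψ j) * toCl (pd i (pd j F) x))

/-- The componentwise Laplacian `Δf = Σᵢ ∂²f/∂xᵢ²`. -/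
def lapD {m : ℕ} (F : (Fin m → ℝ) → Coef m) (x : Fin m → ℝ) : Cl m :=
  ∑ i, toCl (pd i (pd i F) x)

lemma polar_eq {m : ℕ} (u v : Fin m → ℝ) :
    QuadraticMap.polar (Qf m) u v = -2 * ∑ t, u t * v t := by
  have hQ : ∀ w : Fin m → ℝ, Qf m w = ∑ t, -(w t * w t) := by
    intro w
    rw [QuadraticMap.weightedSumSquares_apply]
    exact Finset.sum_congr rfl fun t _ => by simp [smul_eq_mul]
  rw [QuadraticMap.polar, hQ, hQ, hQ, Finset.mul_sum, ← Finset.sum_sub_distrib,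
    ← Finset.sum_sub_distrib]
  exact Finset.sum_congr rfl fun t _ => by simp [Pi.add_apply]; ring

lemma clifford_rel {m : ℕ} {φ : Fin m → (Fin m → ℝ)} (hφ : IsStructuralSet φ) (i j : Fin m) :
    ι (Qf m) (φ i) * ι (Qf m) (φ j) + ι (Qf m) (φ j) * ι (Qf m) (φ i)
      = algebraMap ℝ (Cl m) (if i = j then -2 else 0) := by
  rw [ι_mul_ι_add_swap, polar_eq, hφ i j]
  congr 1
  split <;> ring

lemma key {m : ℕ} (e g : Fin m → Cl m)
    (he : ∀ i j, e i * e j + e j * e i = algebraMap ℝ (Cl m) (if i = j then -2 else 0))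
    (hg : ∀ i j, g i * g j + g j * g i = algebraMap ℝ (Cl m) (if i = j then -2 else 0))
    (a : Fin m → Fin m → Cl m) (ha : ∀ i j, a i j = a j i) :
    ∑ i, ∑ j, ∑ k, e i * (e k * (a i j * (g k * g j)))
      = ∑ k, ∑ i, ∑ j, e k * (e i * (a i j * (g j * g k))) := by
  have he1 : ∀ i k, e i * e k = (if i = k then (-2:ℝ) else 0) • (1 : Cl m) - e k * e i := by
    intro i k
    rw [eq_sub_of_add_eq (he i k), Algebra.algebraMap_eq_smul_one]
  have hg1 : ∀ k j, g k * g j = (if k = j then (-2:ℝ) else 0) • (1 : Cl m) - g j * g k := by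
    intro k j
    rw [eq_sub_of_add_eq (hg k j), Algebra.algebraMap_eq_smul_one]
  have expand : ∀ i j k : Fin m, e i * (e k * (a i j * (g k * g j)))
      = ((if i = k then (-2:ℝ) else 0) * (if k = j then (-2:ℝ) else 0)) • a i j
        - (if i = k then (-2:ℝ) else 0) • (a i j * (g j * g k))
        - (if k = j then (-2:ℝ) else 0) • (e k * (e i * a i j))
        + e k * (e i * (a i j * (g j * g k))) := by
    intro i j k
    rw [show e i * (e k * (a i j * (g k * g j))) = ((e i * e k) * a i j) * (g k * g j) by
      simp only [mul_assoc], he1 i k, hg1 k j]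
    simp only [sub_mul, mul_sub, smul_mul_assoc, mul_smul_comm, one_mul, mul_one, mul_assoc]
    module
  have collapse1 : ∀ (b : Fin m → Cl m) (i : Fin m),
      (∑ k, (if i = k then (-2:ℝ) else 0) • b k) = (-2:ℝ) • b i := by
    intro b i
    rw [Finset.sum_eq_single i]
    · simp
    · intro k _ hk; simp [Ne.symm hk]
    · simp
  have collapse2 : ∀ (b : Fin m → Cl m) (j : Fin m),
      (∑ k, (if k = j then (-2:ℝ) else 0) • b k) = (-2:ℝ) • b j := by
    intro b j
    rw [Finset.sum_eq_single j]
    · simp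
    · intro k _ hk; simp [hk]
    · simp
  set diag := ∑ i, a i i with hdiag
  have hW : (∑ i, ∑ j, a i j * (g j * g i)) = -diag := by
    have hswap : (∑ i, ∑ j, a i j * (g j * g i)) = ∑ i, ∑ j, a i j * (g i * g j) := by
      rw [Finset.sum_comm]
      exact Finset.sum_congr rfl fun i _ => Finset.sum_congr rfl fun j _ => by rw [ha]
    have hWW : (∑ i, ∑ j, a i j * (g j * g i)) + (∑ i, ∑ j, a i j * (g j * g i))
        = (-2:ℝ) • diag := by
      nth_rewrite 2 [hswap]
      rw [← Finset.sum_add_distrib]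
      rw [show (-2:ℝ) • diag = ∑ i, (-2:ℝ) • a i i from Finset.smul_sum]
      refine Finset.sum_congr rfl fun i _ => ?_
      rw [← Finset.sum_add_distrib, ← collapse2 (fun k => a i k) i]
      refine Finset.sum_congr rfl fun j _ => ?_
      rw [← mul_add, hg j i, Algebra.algebraMap_eq_smul_one, mul_smul_comm, mul_one]
    have h2 : (2:ℝ) • (∑ i, ∑ j, a i j * (g j * g i)) = (2:ℝ) • (-diag) := by
      rw [two_smul, hWW]
      module
    exact smul_right_injective (Cl m) two_ne_zero h2
  have hV : (∑ i, ∑ j, e j * (e i * a i j)) = -diag := by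
    have hswap : (∑ i, ∑ j, e j * (e i * a i j)) = ∑ i, ∑ j, e i * (e j * a i j) := by
      rw [Finset.sum_comm]
      exact Finset.sum_congr rfl fun i _ => Finset.sum_congr rfl fun j _ => by rw [ha]
    have hVV : (∑ i, ∑ j, e j * (e i * a i j)) + (∑ i, ∑ j, e j * (e i * a i j))
        = (-2:ℝ) • diag := by
      nth_rewrite 2 [hswap]
      rw [← Finset.sum_add_distrib]
      rw [show (-2:ℝ) • diag = ∑ i, (-2:ℝ) • a i i from Finset.smul_sum]
      refine Finset.sum_congr rfl fun i _ => ?_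
      rw [← Finset.sum_add_distrib, ← collapse2 (fun k => a i k) i]
      refine Finset.sum_congr rfl fun j _ => ?_
      rw [show e j * (e i * a i j) + e i * (e j * a i j) = (e j * e i + e i * e j) * a i j by
        simp only [add_mul, mul_assoc], he j i, Algebra.algebraMap_eq_smul_one, smul_mul_assoc,
        one_mul]
    have h2 : (2:ℝ) • (∑ i, ∑ j, e j * (e i * a i j)) = (2:ℝ) • (-diag) := by
      rw [two_smul, hVV]
      module
    exact smul_right_injective (Cl m) two_ne_zero h2
  calc ∑ i, ∑ j, ∑ k, e i * (e k * (a i j * (g k * g j)))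
      = ∑ i, ∑ j, ∑ k,
          (((if i = k then (-2:ℝ) else 0) * (if k = j then (-2:ℝ) else 0)) • a i j
            - (if i = k then (-2:ℝ) else 0) • (a i j * (g j * g k))
            - (if k = j then (-2:ℝ) else 0) • (e k * (e i * a i j))
            + e k * (e i * (a i j * (g j * g k)))) :=
        Finset.sum_congr rfl fun i _ => Finset.sum_congr rfl fun j _ =>
          Finset.sum_congr rfl fun k _ => expand i j k
    _ = (∑ i, ∑ j, ∑ k, ((if i = k then (-2:ℝ) else 0) * (if k = j then (-2:ℝ) else 0)) • a i j)
        - (∑ i, ∑ j, ∑ k, (if i = k then (-2:ℝ) else 0) • (a i j * (g j * g k)))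
        - (∑ i, ∑ j, ∑ k, (if k = j then (-2:ℝ) else 0) • (e k * (e i * a i j)))
        + (∑ i, ∑ j, ∑ k, e k * (e i * (a i j * (g j * g k)))) := by
      simp only [Finset.sum_add_distrib, Finset.sum_sub_distrib]
    _ = ∑ k, ∑ i, ∑ j, e k * (e i * (a i j * (g j * g k))) := by
      have hS1 : (∑ i, ∑ j, ∑ k,
          ((if i = k then (-2:ℝ) else 0) * (if k = j then (-2:ℝ) else 0)) • a i j)
          = (4:ℝ) • diag := by
        rw [show (4:ℝ) • diag = ∑ i, (4:ℝ) • a i i from Finset.smul_sum]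
        refine Finset.sum_congr rfl fun i _ => ?_
        have hinner : ∀ j : Fin m, (∑ k,
            ((if i = k then (-2:ℝ) else 0) * (if k = j then (-2:ℝ) else 0)) • a i j)
            = (-2:ℝ) • ((if i = j then (-2:ℝ) else 0) • a i j) := by
          intro j
          rw [← collapse1 (fun k => (if k = j then (-2:ℝ) else 0) • a i j) i]
          exact Finset.sum_congr rfl fun k _ => (mul_smul _ _ _)
        simp only [hinner]
        rw [← Finset.smul_sum, collapse1 (fun k => a i k) i, smul_smul]
        norm_num
      have hS2 : (∑ i, ∑ j, ∑ k, (if i = k then (-2:ℝ) else 0) • (a i j * (g j * g k)))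
          = (-2:ℝ) • (∑ i, ∑ j, a i j * (g j * g i)) := by
        rw [Finset.smul_sum]
        refine Finset.sum_congr rfl fun i _ => ?_
        rw [Finset.smul_sum]
        exact Finset.sum_congr rfl fun j _ => collapse1 (fun k => a i j * (g j * g k)) i
      have hS3 : (∑ i, ∑ j, ∑ k, (if k = j then (-2:ℝ) else 0) • (e k * (e i * a i j)))
          = (-2:ℝ) • (∑ i, ∑ j, e j * (e i * a i j)) := by
        rw [Finset.smul_sum]
        refine Finset.sum_congr rfl fun i _ => ?_
        rw [Finset.smul_sum]
        exact Finset.sum_congr rfl fun j _ => collapse2 (fun k => e k * (e i * a i j)) j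
      have hS4 : (∑ i, ∑ j, ∑ k, e k * (e i * (a i j * (g j * g k))))
          = ∑ k, ∑ i, ∑ j, e k * (e i * (a i j * (g j * g k))) := by
        calc (∑ i, ∑ j, ∑ k, e k * (e i * (a i j * (g j * g k))))
            = ∑ i, ∑ k, ∑ j, e k * (e i * (a i j * (g j * g k))) :=
              Finset.sum_congr rfl fun i _ => Finset.sum_comm
          _ = ∑ k, ∑ i, ∑ j, e k * (e i * (a i j * (g j * g k))) := Finset.sum_comm
      rw [hS1, hS2, hS3, hS4, hW, hV]
      module

lemma prod_congr_idem {R : Type*} [CommRing R] (p : R) (hp : p * p = p)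
    {ι : Type*} (s : Finset ι) (f h : ι → R) (hfh : ∀ k ∈ s, p * f k = p * h k) :
    p * ∏ k ∈ s, f k = p * ∏ k ∈ s, h k := by
  classical
  induction s using Finset.induction_on with
  | empty => rfl
  | @insert x s' hx ih =>
    rw [Finset.prod_insert hx, Finset.prod_insert hx]
    have h1 := hfh x (Finset.mem_insert_self _ _)
    have h2 := ih fun k hk => hfh k (Finset.mem_insert_of_mem hk)
    calc p * (f x * ∏ k ∈ s', f k) = (p * f x) * ∏ k ∈ s', f k := by ring
      _ = (p * h x) * ∏ k ∈ s', f k := by rw [h1]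
      _ = h x * (p * ∏ k ∈ s', f k) := by ring
      _ = h x * (p * ∏ k ∈ s', h k) := by rw [h2]
      _ = p * (h x * ∏ k ∈ s', h k) := by ring

lemma sum_invol_annihilate {R : Type*} [CommRing R] [Algebra ℝ R] :
    ∀ (n : ℕ) (v : Fin n → R), (∀ i, v i * v i = 1) →
      (∏ k ∈ Finset.range (n + 1),
        ((∑ i, v i) - algebraMap ℝ R ((n : ℝ) - 2 * k))) = 0 := by
  intro n
  induction n with
  | zero =>
    intro v _
    simp
  | succ n ih =>
    intro v hv
    have hS : (∑ i, v i) = (∑ i : Fin n, v i.castSucc) + v (Fin.last n) :=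
      Fin.sum_univ_castSucc v
    rw [hS]
    set y := ∑ i : Fin n, v i.castSucc with hy
    set w := v (Fin.last n) with hw0
    have hw : w * w = 1 := hv _
    set a := algebraMap ℝ R (1/2) with ha
    have h2 : a * 2 = 1 := by
      rw [ha, show (2 : R) = algebraMap ℝ R 2 from (map_ofNat _ 2).symm, ← map_mul]
      norm_num
    have hpp : (a * (1 + w)) * (a * (1 + w)) = a * (1 + w) := by
      linear_combination a * a * hw + a * (1 + w) * h2
    have hqq : (a * (1 - w)) * (a * (1 - w)) = a * (1 - w) := by
      linear_combination a * a * hw + a * (1 - w) * h2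
    have hIH : (∏ k ∈ Finset.range (n + 1), (y - algebraMap ℝ R ((n : ℝ) - 2 * k))) = 0 :=
      ih (fun i => v i.castSucc) (fun i => hv _)
    have hP : (a * (1 + w)) * ∏ k ∈ Finset.range (n + 1 + 1),
        (y + w - algebraMap ℝ R ((↑(n+1) : ℝ) - 2 * k)) = 0 := by
      have step : ∀ k ∈ Finset.range (n + 1 + 1),
          (a * (1 + w)) * (y + w - algebraMap ℝ R ((↑(n+1) : ℝ) - 2 * k))
            = (a * (1 + w)) * (y - algebraMap ℝ R ((n : ℝ) - 2 * k)) := by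
        intro k _
        have hcd : algebraMap ℝ R ((↑(n+1) : ℝ) - 2 * k)
            = algebraMap ℝ R ((n : ℝ) - 2 * k) + 1 := by
          rw [← map_one (algebraMap ℝ R), ← map_add]
          congr 1
          push_cast
          ring
        rw [hcd]
        linear_combination a * hw
      rw [prod_congr_idem _ hpp _ _ _ step, Finset.prod_range_succ, hIH, zero_mul, mul_zero]
    have hQ : (a * (1 - w)) * ∏ k ∈ Finset.range (n + 1 + 1),
        (y + w - algebraMap ℝ R ((↑(n+1) : ℝ) - 2 * k)) = 0 := by
      have step : ∀ k ∈ Finset.range (n + 1 + 1),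
          (a * (1 - w)) * (y + w - algebraMap ℝ R ((↑(n+1) : ℝ) - 2 * k))
            = (a * (1 - w)) * (y - algebraMap ℝ R ((n : ℝ) + 2 - 2 * k)) := by
        intro k _
        have hcd : algebraMap ℝ R ((↑(n+1) : ℝ) - 2 * k)
            = algebraMap ℝ R ((n : ℝ) + 2 - 2 * k) - 1 := by
          rw [← map_one (algebraMap ℝ R), ← map_sub]
          congr 1
          push_cast
          ring
        rw [hcd]
        linear_combination (-a) * hw
      rw [prod_congr_idem _ hqq _ _ _ step, Finset.prod_range_succ']
      have hshift : ∀ k, (y - algebraMap ℝ R ((n : ℝ) + 2 - 2 * ((k : ℕ) + 1 : ℕ)))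
          = (y - algebraMap ℝ R ((n : ℝ) - 2 * k)) := by
        intro k
        congr 1
        push_cast
        ring
      rw [show (∏ k ∈ Finset.range (n + 1),
            (y - algebraMap ℝ R ((n : ℝ) + 2 - 2 * ((k : ℕ) + 1 : ℕ))))
          = ∏ k ∈ Finset.range (n + 1), (y - algebraMap ℝ R ((n : ℝ) - 2 * k)) from
        Finset.prod_congr rfl fun k _ => hshift k, hIH, zero_mul, mul_zero]
    have hsum : ((a * (1 + w)) + (a * (1 - w))) = 1 := by linear_combination h2
    calc (∏ k ∈ Finset.range (n + 1 + 1),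
          (y + w - algebraMap ℝ R ((↑(n+1) : ℝ) - 2 * k)))
        = ((a * (1 + w)) + (a * (1 - w))) * ∏ k ∈ Finset.range (n + 1 + 1),
            (y + w - algebraMap ℝ R ((↑(n+1) : ℝ) - 2 * k)) := by rw [hsum, one_mul]
      _ = 0 := by rw [add_mul, hP, hQ, add_zero]

set_option maxHeartbeats 1000000 in
set_option synthInstance.maxHeartbeats 400000 in
lemma sum_invol_ker {M : Type*} [AddCommGroup M] [Module ℝ M] (n : ℕ)
    (V : Fin n → Module.End ℝ M) (hcomm : ∀ j k, V j * V k = V k * V j)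
    (hsq : ∀ j, V j * V j = 1) (hodd : Odd n) (y : M) (hy : (∑ j, V j) y = 0) : y = 0 := by
  classical
  set sSet : Set (Module.End ℝ M) := Set.range V with hsSet
  have hcomm' : ∀ a ∈ sSet, ∀ b ∈ sSet, a * b = b * a := by
    rintro a ⟨j, rfl⟩ b ⟨k, rfl⟩
    exact hcomm j k
  letI : CommRing (Algebra.adjoin ℝ sSet) := Algebra.adjoinCommRingOfComm ℝ hcomm'
  set v' : Fin n → Algebra.adjoin ℝ sSet := fun j => ⟨V j, Algebra.subset_adjoin ⟨j, rfl⟩⟩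
    with hv'def
  have hv' : ∀ i, v' i * v' i = 1 := fun i => Subtype.ext (hsq i)
  have hann := sum_invol_annihilate n v' hv'
  have hcoe : Subalgebra.val (Algebra.adjoin ℝ sSet) (∑ i, v' i) = ∑ j, V j :=
    map_sum (Subalgebra.val _) v' Finset.univ
  have hfac : ∀ t : ℕ,
      (((∑ i, v' i) - algebraMap ℝ (Algebra.adjoin ℝ sSet) ((n : ℝ) - 2 * t) :
          Algebra.adjoin ℝ sSet) : Module.End ℝ M)
        = (∑ j, V j) - algebraMap ℝ (Module.End ℝ M) ((n : ℝ) - 2 * t) := by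
    intro t
    have h := map_sub (Subalgebra.val (Algebra.adjoin ℝ sSet)) (∑ i, v' i)
      (algebraMap ℝ (Algebra.adjoin ℝ sSet) ((n : ℝ) - 2 * t))
    rw [AlgHom.commutes] at h
    rw [show (((∑ i, v' i) - algebraMap ℝ (Algebra.adjoin ℝ sSet) ((n : ℝ) - 2 * t) :
        Algebra.adjoin ℝ sSet) : Module.End ℝ M)
        = Subalgebra.val _ ((∑ i, v' i) - algebraMap ℝ _ ((n : ℝ) - 2 * t)) from rfl, h, hcoe]
  have happ : ∀ s : Finset ℕ,
      (((∏ k ∈ s, ((∑ i, v' i) - algebraMap ℝ (Algebra.adjoin ℝ sSet) ((n : ℝ) - 2 * k))) :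
          Algebra.adjoin ℝ sSet) : Module.End ℝ M) y
        = (∏ k ∈ s, (-((n : ℝ) - 2 * k))) • y := by
    intro s
    induction s using Finset.induction_on with
    | empty => simp
    | @insert t s' ht ih =>
      rw [Finset.prod_insert ht, Finset.prod_insert ht, MulMemClass.coe_mul,
        Module.End.mul_apply, ih, map_smul, hfac, LinearMap.sub_apply, hy,
        Module.algebraMap_end_apply, zero_sub]
      module
  have h00 := happ (Finset.range (n + 1))
  rw [hann] at h00
  have h0 : (∏ k ∈ Finset.range (n + 1), (-((n : ℝ) - 2 * k))) • y = 0 := by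
    rw [← h00]
    rfl
  rcases smul_eq_zero.mp h0 with h | h
  · exfalso
    rcases Finset.prod_eq_zero_iff.mp h with ⟨k, _, hk⟩
    have h1 : (n : ℝ) = 2 * k := by linarith [neg_eq_zero.mp hk]
    have h2 : n = 2 * k := by exact_mod_cast h1
    obtain ⟨q, hq⟩ := hodd
    omega
  · exact h

lemma psi1_ker {m : ℕ} {φ ψ : Fin m → (Fin m → ℝ)}
    (hφ : IsStructuralSet φ) (hψ : IsStructuralSet ψ) (hm : Odd m)
    (x : Cl m) (hx : Psi1 φ ψ x = 0) : x = 0 := by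
  obtain ⟨n, hn⟩ := hm
  have hm0 : 0 < m := by omega
  set z : Fin m := ⟨0, hm0⟩ with hz
  set e : Fin m → Cl m := fun j => ι (Qf m) (φ j) with hedef
  set g : Fin m → Cl m := fun j => ι (Qf m) (ψ j) with hgdef
  have heRel : ∀ i j, e i * e j + e j * e i = algebraMap ℝ (Cl m) (if i = j then -2 else 0) :=
    fun i j => clifford_rel hφ i j
  have hgRel : ∀ i j, g i * g j + g j * g i = algebraMap ℝ (Cl m) (if i = j then -2 else 0) :=
    fun i j => clifford_rel hψ i j
  have sqe : ∀ j, e j * e j = algebraMap ℝ (Cl m) (-1) := by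
    intro j
    have h := heRel j j
    rw [if_pos rfl] at h
    apply smul_right_injective (Cl m) (two_ne_zero (α := ℝ))
    show (2:ℝ) • (e j * e j) = (2:ℝ) • algebraMap ℝ (Cl m) (-1)
    rw [two_smul, h, Algebra.smul_def, ← map_mul]
    norm_num
  have sqg : ∀ j, g j * g j = algebraMap ℝ (Cl m) (-1) := by
    intro j
    have h := hgRel j j
    rw [if_pos rfl] at h
    apply smul_right_injective (Cl m) (two_ne_zero (α := ℝ))
    show (2:ℝ) • (g j * g j) = (2:ℝ) • algebraMap ℝ (Cl m) (-1)
    rw [two_smul, h, Algebra.smul_def, ← map_mul]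
    norm_num
  have antie : ∀ j k, j ≠ k → e j * e k = -(e k * e j) := by
    intro j k hjk
    have h := heRel j k
    rw [if_neg hjk, map_zero] at h
    exact eq_neg_of_add_eq_zero_left h
  have antig : ∀ j k, j ≠ k → g j * g k = -(g k * g j) := by
    intro j k hjk
    have h := hgRel j k
    rw [if_neg hjk, map_zero] at h
    exact eq_neg_of_add_eq_zero_left h
  set V : Fin m → Module.End ℝ (Cl m) :=
    fun j => LinearMap.mulLeft ℝ (e z * e j) ∘ₗ LinearMap.mulRight ℝ (g j * g z) with hVdef
  have hVapp : ∀ j (x : Cl m), V j x = (e z * e j) * (x * (g j * g z)) := fun j x => rfl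
  have hE : ∀ j k, (e z * e j) * (e z * e k) = (if j = z then (-1:ℝ) else 1) • (e j * e k) := by
    intro j k
    by_cases hj : j = z
    · rw [if_pos hj, hj, sqe z, Algebra.algebraMap_eq_smul_one, smul_mul_assoc, one_mul]
    · rw [if_neg hj, one_smul]
      calc (e z * e j) * (e z * e k) = e z * ((e j * e z) * e k) := by simp only [mul_assoc]
        _ = e z * (-(e z * e j) * e k) := by rw [antie j z hj]
        _ = -(e z * (e z * (e j * e k))) := by simp only [neg_mul, mul_neg, mul_assoc]
        _ = -(algebraMap ℝ (Cl m) (-1) * (e j * e k)) := by rw [← mul_assoc, sqe z]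
        _ = e j * e k := by
            rw [Algebra.algebraMap_eq_smul_one, smul_mul_assoc, one_mul, neg_smul, one_smul,
              neg_neg]
  have hG : ∀ j k, (g k * g z) * (g j * g z) = (if j = z then (-1:ℝ) else 1) • (g k * g j) := by
    intro j k
    by_cases hj : j = z
    · rw [if_pos hj, hj, mul_assoc, sqg z, ← mul_assoc, ← Algebra.commutes,
        Algebra.algebraMap_eq_smul_one, smul_mul_assoc, one_mul]
    · rw [if_neg hj, one_smul]
      calc (g k * g z) * (g j * g z) = g k * ((g z * g j) * g z) := by simp only [mul_assoc]
        _ = g k * (-(g j * g z) * g z) := by rw [antig z j (Ne.symm hj)]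
        _ = -(g k * (g j * (g z * g z))) := by simp only [neg_mul, mul_neg, mul_assoc]
        _ = -(g k * (g j * algebraMap ℝ (Cl m) (-1))) := by rw [sqg z]
        _ = g k * g j := by
            rw [Algebra.algebraMap_eq_smul_one, mul_smul_comm, mul_one, mul_smul_comm,
              neg_smul, one_smul, neg_neg]
  have ML : ∀ j k (x : Cl m), V j (V k x) = (e j * e k) * (x * (g k * g j)) := by
    intro j k x
    rw [hVapp, hVapp]
    calc (e z * e j) * ((e z * e k) * (x * (g k * g z)) * (g j * g z))
        = ((e z * e j) * (e z * e k)) * (x * ((g k * g z) * (g j * g z))) := by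
          simp only [mul_assoc]
      _ = (e j * e k) * (x * (g k * g j)) := by
          rw [hE, hG]
          by_cases hj : j = z
          · rw [if_pos hj]
            simp only [smul_mul_assoc, mul_smul_comm, smul_smul]
            norm_num
          · rw [if_neg hj]
            simp only [one_smul]
  have hComm : ∀ j k, V j * V k = V k * V j := by
    intro j k
    by_cases hjk : j = k
    · rw [hjk]
    · ext x
      rw [Module.End.mul_apply, Module.End.mul_apply, ML, ML, antie k j (Ne.symm hjk),
        antig j k hjk]
      simp only [neg_mul, mul_neg, neg_neg]
  have hV1 : ∀ j, V j * V j = 1 := by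
    intro j
    ext x
    rw [Module.End.mul_apply, ML, sqe j, sqg j, Module.End.one_apply,
      Algebra.algebraMap_eq_smul_one, smul_mul_assoc, mul_smul_comm]
    simp [smul_smul]
  set S : Module.End ℝ (Cl m) := ∑ j, V j with hSdef
  have hSapp : ∀ y : Cl m, S y = ∑ j, V j y := fun y => LinearMap.sum_apply _ _ _
  have hew : ∀ j, ι (Qf m) (φ j) = e j := fun j => rfl
  have hgw : ∀ j, ι (Qf m) (ψ j) = g j := fun j => rfl
  have hPsiPsi : ∀ y : Cl m, Psi1 φ ψ (Psi1 φ ψ y) = S (S y) := by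
    intro y
    have h1 : S (S y) = ∑ j, ∑ k, (e j * e k) * (y * (g k * g j)) := by
      rw [hSapp]
      refine Finset.sum_congr rfl fun j _ => ?_
      rw [hSapp, map_sum]
      exact Finset.sum_congr rfl fun k _ => ML j k y
    rw [h1]
    simp only [Psi1, hew, hgw, Finset.sum_mul, Finset.mul_sum, mul_assoc]
  have kernel : ∀ y : Cl m, S y = 0 → y = 0 := fun y hy =>
    sum_invol_ker m V hComm hV1 ⟨n, by omega⟩ y (by rw [← hSdef]; exact hy)
  have h1 : Psi1 φ ψ (Psi1 φ ψ x) = 0 := by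
    rw [hx]
    simp [Psi1]
  rw [hPsiPsi] at h1
  exact kernel x (kernel (S x) h1)

lemma pd_symm {m : ℕ} (F : (Fin m → ℝ) → Coef m) (hF : ContDiff ℝ 2 F)
    (x : Fin m → ℝ) (i j : Fin m) : pd i (pd j F) x = pd j (pd i F) x := by
  have hdiff : Differentiable ℝ F := hF.differentiable (by norm_num)
  have h1 : ContDiff ℝ 1 (fderiv ℝ F) := hF.fderiv_right (by norm_num)
  have hd1 : Differentiable ℝ (fderiv ℝ F) := h1.differentiable one_ne_zero
  have hsymm := second_derivative_symmetric (f := F) (f' := fderiv ℝ F)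
    (fun y => (hdiff y).hasFDerivAt) ((hd1 x).hasFDerivAt) (Pi.single i 1) (Pi.single j 1)
  have hkey : ∀ u v : Fin m → ℝ,
      fderiv ℝ (fun y => fderiv ℝ F y u) x v = fderiv ℝ (fderiv ℝ F) x v u := by
    intro u v
    have h := fderiv_clm_apply (hd1 x) (differentiableAt_const u)
    have h2 := congrFun (congrArg DFunLike.coe h) v
    simp only [ContinuousLinearMap.add_apply, ContinuousLinearMap.flip_apply,
      ContinuousLinearMap.comp_apply, fderiv_const, fderiv_const_apply, Pi.zero_apply,
      ContinuousLinearMap.zero_apply, map_zero, add_zero, zero_add] at h2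
    exact h2
  show fderiv ℝ (fun y => fderiv ℝ F y (Pi.single j 1)) x (Pi.single i 1)
      = fderiv ℝ (fun y => fderiv ℝ F y (Pi.single i 1)) x (Pi.single j 1)
  rw [hkey, hkey, hsymm]


/-- for C²-smooth `f : ℝᵐ → ℝ_{0,m}`,
`φ∂[Ψ₁^{φ,ψ}(f)]ψ∂ = Ψ₁^{φ,ψ}(φ∂[f]ψ∂)`; in particular, for `m` odd, `f` is
`(φ,ψ)`-inframonogenic iff `Ψ₁^{φ,ψ}(f)` is. -/
theorem sandwich_psi1 {m : ℕ} (φ ψ : Fin m → (Fin m → ℝ))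
    (hφ : IsStructuralSet φ) (hψ : IsStructuralSet ψ)
    (F : (Fin m → ℝ) → Coef m) (hF : ContDiff ℝ 2 F) :
    (∀ x : Fin m → ℝ,
      (∑ i, ∑ j, ι (Qf m) (φ i) * Psi1 φ ψ (toCl (pd i (pd j F) x)) * ι (Qf m) (ψ j))
        = Psi1 φ ψ (sandwichD φ ψ F x)) ∧
    (Odd m →
      ((∀ x : Fin m → ℝ, sandwichD φ ψ F x = 0) ↔
        (∀ x : Fin m → ℝ,
          (∑ i, ∑ j, ι (Qf m) (φ i) * Psi1 φ ψ (toCl (pd i (pd j F) x)) * ι (Qf m) (ψ j))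
            = 0))) := by
  have part1 : ∀ x : Fin m → ℝ,
      (∑ i, ∑ j, ι (Qf m) (φ i) * Psi1 φ ψ (toCl (pd i (pd j F) x)) * ι (Qf m) (ψ j))
        = Psi1 φ ψ (sandwichD φ ψ F x) := by
    intro x
    have ha : ∀ i j, (fun i j => toCl (pd i (pd j F) x)) i j
        = (fun i j => toCl (pd i (pd j F) x)) j i :=
      fun i j => congrArg toCl (pd_symm F hF x i j)
    have := key (fun i => ι (Qf m) (φ i)) (fun j => ι (Qf m) (ψ j))
      (fun i j => clifford_rel hφ i j) (fun i j => clifford_rel hψ i j)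
      (fun i j => toCl (pd i (pd j F) x)) ha
    simp only [Psi1, sandwichD, Finset.sum_mul, Finset.mul_sum, mul_assoc]
    exact this
  refine ⟨part1, fun hm => ⟨fun h x => by rw [part1 x, h x]; simp [Psi1], fun h x => ?_⟩⟩
  have h1 := h x
  rw [part1 x] at h1
  exact psi1_ker hφ hψ hm _ h1
end
end

section
/- Let φ, ψ be structural sets in ℝ_{0,m}. For every a ∈ ℝ_{0,m} and k = 1,...,m-1: (m-k+1) Ψ_{k-1}^{φ,ψ}(a) + (k+1) Ψ_{k+1}^{φ,ψ}(a) = Ψ₁^{φ,ψ}(Ψ_k^{φ,ψ}(a)). -/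
open CliffordAlgebra

noncomputable section

section Aux
variable {m : ℕ}

lemma Qf_apply_structural {u : Fin m → Fin m → ℝ} (hu : IsStructuralSet u) (i : Fin m) :
    Qf m (u i) = -1 := by
  have h := hu i i
  simp only [if_true, eq_self_iff_true] at h
  rw [QuadraticMap.weightedSumSquares_apply]
  simp only [smul_eq_mul, neg_one_mul, Finset.sum_neg_distrib]
  rw [h]


lemma iota_sq {u : Fin m → Fin m → ℝ} (hu : IsStructuralSet u) (i : Fin m) :
    ι (Qf m) (u i) * ι (Qf m) (u i) = -1 := by
  rw [ι_sq_scalar, Qf_apply_structural hu, map_neg, map_one]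

lemma iota_anticomm {u : Fin m → Fin m → ℝ} (hu : IsStructuralSet u) {i j : Fin m}
    (h : i ≠ j) :
    ι (Qf m) (u i) * ι (Qf m) (u j) = - (ι (Qf m) (u j) * ι (Qf m) (u i)) := by
  have hp : QuadraticMap.polar (Qf m) (u i) (u j) = 0 := by
    simp only [QuadraticMap.polar, QuadraticMap.weightedSumSquares_apply, smul_eq_mul]
    rw [← Finset.sum_sub_distrib, ← Finset.sum_sub_distrib]
    have h2 := hu i j
    rw [if_neg h] at h2
    have : ∀ t, (-1:ℝ) * ((u i + u j) t * (u i + u j) t) - -1 * (u i t * u i t)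
        - -1 * (u j t * u j t) = -2 * (u i t * u j t) := by
      intro t; simp [Pi.add_apply]; ring
    rw [Finset.sum_congr rfl (fun t _ => this t)]
    rw [← Finset.mul_sum, h2, mul_zero]
  have h0 := CliffordAlgebra.ι_mul_ι_add_swap (Q := Qf m) (u i) (u j)
  rw [hp, map_zero] at h0
  exact eq_neg_of_add_eq_zero_left h0
end Aux

section Aux2
variable {m : ℕ}

lemma mul_listProd_of_mem {u : Fin m → Fin m → ℝ} (hu : IsStructuralSet u) {j : Fin m} :
    ∀ (L : List (Fin m)), j ∈ L →
    ι (Qf m) (u j) * (L.map (fun i => ι (Qf m) (u i))).prod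
      = ((-1 : ℝ) ^ (L.idxOf j + 1)) • ((L.erase j).map (fun i => ι (Qf m) (u i))).prod := by
  intro L
  induction L with
  | nil => simp
  | cons b L ih =>
    intro hj
    by_cases hb : b = j
    · subst hb
      simp only [List.map_cons, List.prod_cons, List.erase_cons_head, List.idxOf_cons_self,
        pow_one]
      rw [← mul_assoc, iota_sq hu]
      simp
    · have hjL : j ∈ L := by
        rcases List.mem_cons.mp hj with h | h
        · exact absurd h.symm hb
        · exact h
      have hidx : (b :: L).idxOf j = L.idxOf j + 1 := by
        simp [List.idxOf_cons, hb]
      have herase : (b :: L).erase j = b :: L.erase j := by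
        simp [List.erase_cons, hb]
      rw [hidx, herase]
      simp only [List.map_cons, List.prod_cons]
      rw [← mul_assoc, iota_anticomm hu (fun h => hb h.symm), neg_mul, mul_assoc, ih hjL,
        mul_smul_comm, ← neg_smul]
      congr 1
      rw [pow_succ]
      ring
end Aux2

section Aux3
variable {m : ℕ}

lemma sort_erase (A : Finset (Fin m)) (j : Fin m) :
    (A.erase j).sort (· ≤ ·) = (A.sort (· ≤ ·)).erase j := by
  apply List.Perm.eq_of_pairwise' (Finset.pairwise_sort _ _)
    ((Finset.pairwise_sort A (· ≤ ·)).sublist List.erase_sublist)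
  rw [← Multiset.coe_eq_coe, ← Multiset.coe_erase, Finset.sort_eq, Finset.sort_eq,
    Finset.erase_val]

lemma iota_mul_prodS_of_mem {u : Fin m → Fin m → ℝ} (hu : IsStructuralSet u)
    {j : Fin m} {A : Finset (Fin m)} (hj : j ∈ A) :
    ι (Qf m) (u j) * prodS u A
      = ((-1 : ℝ) ^ ((A.sort (· ≤ ·)).idxOf j + 1)) • prodS u (A.erase j) := by
  rw [prodS, prodS, sort_erase]
  exact mul_listProd_of_mem hu _ ((Finset.mem_sort _).mpr hj)

lemma reverse_prodS_mul_iota {u : Fin m → Fin m → ℝ} (hu : IsStructuralSet u)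
    {j : Fin m} {A : Finset (Fin m)} (hj : j ∈ A) :
    reverse (prodS u A) * ι (Qf m) (u j)
      = ((-1 : ℝ) ^ ((A.sort (· ≤ ·)).idxOf j + 1)) • reverse (prodS u (A.erase j)) := by
  have : reverse (prodS u A) * ι (Qf m) (u j)
      = reverse (ι (Qf m) (u j) * prodS u A) := by
    rw [reverse.map_mul, reverse_ι]
  rw [this, iota_mul_prodS_of_mem hu hj, map_smul]

lemma key_mem (φ ψ : Fin m → Fin m → ℝ) (hφ : IsStructuralSet φ)
    (hψ : IsStructuralSet ψ) (a : Cl m) {j : Fin m} {A : Finset (Fin m)} (hj : j ∈ A) :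
    ι (Qf m) (φ j) * (prodS φ A * a * reverse (prodS ψ A)) * ι (Qf m) (ψ j)
      = prodS φ (A.erase j) * a * reverse (prodS ψ (A.erase j)) := by
  have h1 := iota_mul_prodS_of_mem hφ hj
  have h2 := reverse_prodS_mul_iota hψ hj
  calc ι (Qf m) (φ j) * (prodS φ A * a * reverse (prodS ψ A)) * ι (Qf m) (ψ j)
      = (ι (Qf m) (φ j) * prodS φ A) * a * (reverse (prodS ψ A) * ι (Qf m) (ψ j)) := by
        noncomm_ring
    _ = prodS φ (A.erase j) * a * reverse (prodS ψ (A.erase j)) := by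
        rw [h1, h2, smul_mul_assoc, smul_mul_assoc, mul_smul_comm, smul_smul,
          ← pow_add]
        rw [show ((A.sort (· ≤ ·)).idxOf j + 1) + ((A.sort (· ≤ ·)).idxOf j + 1)
          = 2 * ((A.sort (· ≤ ·)).idxOf j + 1) by ring]
        rw [pow_mul, neg_one_sq, one_pow, one_smul]

lemma key_not_mem (φ ψ : Fin m → Fin m → ℝ) (hφ : IsStructuralSet φ)
    (hψ : IsStructuralSet ψ) (a : Cl m) {j : Fin m} {A : Finset (Fin m)} (hj : j ∉ A) :
    ι (Qf m) (φ j) * (prodS φ A * a * reverse (prodS ψ A)) * ι (Qf m) (ψ j)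
      = prodS φ (insert j A) * a * reverse (prodS ψ (insert j A)) := by
  have h := key_mem φ ψ hφ hψ a (A := insert j A) (j := j) (Finset.mem_insert_self j A)
  rw [Finset.erase_insert hj] at h
  have h2 : ι (Qf m) (φ j) * (ι (Qf m) (φ j) * (prodS φ (insert j A) * a
        * reverse (prodS ψ (insert j A))) * ι (Qf m) (ψ j)) * ι (Qf m) (ψ j)
      = prodS φ (insert j A) * a * reverse (prodS ψ (insert j A)) := by
    calc ι (Qf m) (φ j) * (ι (Qf m) (φ j) * (prodS φ (insert j A) * a
          * reverse (prodS ψ (insert j A))) * ι (Qf m) (ψ j)) * ι (Qf m) (ψ j)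
        = (ι (Qf m) (φ j) * ι (Qf m) (φ j)) * (prodS φ (insert j A) * a
          * reverse (prodS ψ (insert j A))) * (ι (Qf m) (ψ j) * ι (Qf m) (ψ j)) := by
          noncomm_ring
      _ = _ := by rw [iota_sq hφ, iota_sq hψ]; noncomm_ring
  rw [h] at h2
  exact h2
end Aux3

/-- for structural sets `φ, ψ`, every `a ∈ ℝ_{0,m}` and
`k = 1,…,m-1`: `(m-k+1) Ψ_{k-1}^{φ,ψ}(a) + (k+1) Ψ_{k+1}^{φ,ψ}(a) = Ψ₁^{φ,ψ}(Ψ_k^{φ,ψ}(a))`. -/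
theorem psiK_recursion {m : ℕ} (φ ψ : Fin m → (Fin m → ℝ))
    (hφ : IsStructuralSet φ) (hψ : IsStructuralSet ψ) (a : Cl m)
    (k : ℕ) (hk1 : 1 ≤ k) (hk2 : k ≤ m - 1) :
    ((m - k + 1 : ℕ) : ℝ) • PsiK φ ψ (k - 1) a + ((k + 1 : ℕ) : ℝ) • PsiK φ ψ (k + 1) a
      = Psi1 φ ψ (PsiK φ ψ k a) := by
  classical
  have hm : k + 1 ≤ m := by omega
  set T : Finset (Fin m) → Cl m := fun A => prodS φ A * a * reverse (prodS ψ A) with hT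
  have hPsi : ∀ n : ℕ, PsiK φ ψ n a
      = ∑ A ∈ Finset.univ.filter (fun A : Finset (Fin m) => A.card = n), T A :=
    fun n => rfl
  have step1 : ∀ j : Fin m,
      (∑ A ∈ Finset.univ.filter (fun A : Finset (Fin m) => A.card = k),
        ι (Qf m) (φ j) * T A * ι (Qf m) (ψ j))
      = (∑ B ∈ Finset.univ.filter (fun B : Finset (Fin m) => B.card = k - 1 ∧ j ∉ B), T B)
        + ∑ C ∈ Finset.univ.filter (fun C : Finset (Fin m) => C.card = k + 1 ∧ j ∈ C), T C := by
    intro j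
    rw [← Finset.sum_filter_add_sum_filter_not
      (Finset.univ.filter (fun A : Finset (Fin m) => A.card = k)) (fun A => j ∈ A)]
    congr 1
    · refine Finset.sum_nbij' (i := fun A => A.erase j) (j := fun B => insert j B)
        ?_ ?_ ?_ ?_ ?_
      · intro A hA
        simp only [Finset.mem_filter, Finset.mem_univ, true_and] at hA ⊢
        exact ⟨by rw [Finset.card_erase_of_mem hA.2, hA.1], Finset.notMem_erase j A⟩
      · intro B hB
        simp only [Finset.mem_filter, Finset.mem_univ, true_and] at hB ⊢
        exact ⟨by rw [Finset.card_insert_of_notMem hB.2, hB.1]; omega,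
          Finset.mem_insert_self j B⟩
      · intro A hA
        simp only [Finset.mem_filter, Finset.mem_univ, true_and] at hA
        exact Finset.insert_erase hA.2
      · intro B hB
        simp only [Finset.mem_filter, Finset.mem_univ, true_and] at hB
        exact Finset.erase_insert hB.2
      · intro A hA
        simp only [Finset.mem_filter, Finset.mem_univ, true_and] at hA
        exact key_mem φ ψ hφ hψ a hA.2
    · refine Finset.sum_nbij' (i := fun A => insert j A) (j := fun C => C.erase j)
        ?_ ?_ ?_ ?_ ?_
      · intro A hA
        simp only [Finset.mem_filter, Finset.mem_univ, true_and] at hA ⊢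
        exact ⟨by rw [Finset.card_insert_of_notMem hA.2, hA.1],
          Finset.mem_insert_self j A⟩
      · intro C hC
        simp only [Finset.mem_filter, Finset.mem_univ, true_and] at hC ⊢
        exact ⟨by rw [Finset.card_erase_of_mem hC.2, hC.1]; omega, Finset.notMem_erase j C⟩
      · intro A hA
        simp only [Finset.mem_filter, Finset.mem_univ, true_and] at hA
        exact Finset.erase_insert hA.2
      · intro C hC
        simp only [Finset.mem_filter, Finset.mem_univ, true_and] at hC
        exact Finset.insert_erase hC.2
      · intro A hA
        simp only [Finset.mem_filter, Finset.mem_univ, true_and] at hA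
        exact key_not_mem φ ψ hφ hψ a hA.2
  have count1 : ∀ n : ℕ,
      (∑ j : Fin m, ∑ B ∈ Finset.univ.filter
          (fun B : Finset (Fin m) => B.card = n ∧ j ∉ B), T B)
      = ((m - n : ℕ) : ℝ) • ∑ B ∈ Finset.univ.filter
          (fun B : Finset (Fin m) => B.card = n), T B := by
    intro n
    have : ∀ j : Fin m, (∑ B ∈ Finset.univ.filter
          (fun B : Finset (Fin m) => B.card = n ∧ j ∉ B), T B)
        = ∑ B : Finset (Fin m), if B.card = n ∧ j ∉ B then T B else 0 :=
      fun j => Finset.sum_filter _ _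
    rw [Finset.sum_congr rfl (fun j _ => this j), Finset.sum_comm]
    rw [Finset.smul_sum, Finset.sum_filter]
    apply Finset.sum_congr rfl
    intro B _
    by_cases hB : B.card = n
    · simp only [hB, true_and, if_true]
      rw [← Finset.sum_filter]
      have hc : Finset.univ.filter (fun x : Fin m => x ∉ B) = Bᶜ := by
        ext x; simp
      rw [hc, Finset.sum_const, Finset.card_compl, hB, Fintype.card_fin]
      exact (Nat.cast_smul_eq_nsmul ℝ _ _).symm
    · simp [hB]
  have count2 : ∀ n : ℕ,
      (∑ j : Fin m, ∑ C ∈ Finset.univ.filter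
          (fun C : Finset (Fin m) => C.card = n ∧ j ∈ C), T C)
      = ((n : ℕ) : ℝ) • ∑ C ∈ Finset.univ.filter
          (fun C : Finset (Fin m) => C.card = n), T C := by
    intro n
    have : ∀ j : Fin m, (∑ C ∈ Finset.univ.filter
          (fun C : Finset (Fin m) => C.card = n ∧ j ∈ C), T C)
        = ∑ C : Finset (Fin m), if C.card = n ∧ j ∈ C then T C else 0 :=
      fun j => Finset.sum_filter _ _
    rw [Finset.sum_congr rfl (fun j _ => this j), Finset.sum_comm]
    rw [Finset.smul_sum, Finset.sum_filter]
    apply Finset.sum_congr rfl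
    intro C _
    by_cases hC : C.card = n
    · simp only [hC, true_and, if_true]
      rw [← Finset.sum_filter]
      have hc : Finset.univ.filter (fun x : Fin m => x ∈ C) = C := by
        ext x; simp
      rw [hc, Finset.sum_const, hC]
      exact (Nat.cast_smul_eq_nsmul ℝ _ _).symm
    · simp [hC]
  rw [Psi1, hPsi k]
  have expand : ∀ j : Fin m,
      (ι (Qf m) (φ j) * (∑ A ∈ Finset.univ.filter
          (fun A : Finset (Fin m) => A.card = k), T A) * ι (Qf m) (ψ j))
      = ∑ A ∈ Finset.univ.filter (fun A : Finset (Fin m) => A.card = k),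
          ι (Qf m) (φ j) * T A * ι (Qf m) (ψ j) := by
    intro j; rw [Finset.mul_sum, Finset.sum_mul]
  rw [Finset.sum_congr rfl (fun j _ => (expand j).trans (step1 j)),
    Finset.sum_add_distrib, count1 (k - 1), count2 (k + 1), ← hPsi, ← hPsi]
  congr 3
  omega
end
end
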